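/- Let F be the free group on the disjoint union K ⊔ L of two finite nonempty sets, and let ⟨K⟩ be the (finitely generated) subgroup generated by K. There exists a subset S ⊆ F such that: S is closed in the profinite topology of F; S is discrete in the profinite topology of F; the reduced word of every element of S ends in a generator from L or the inverse of a generator from L; and the product set S⟨K⟩ is not closed in the profinite topology of F. -/

import Mathlib

open scoped Pointwise

/-- A subset `C` of a group is closed in the profinite topology iff every point
outside `C` is separated from `C` by a coset of a finite-index normal subgroup. -/
def IsPTClosed {G : Type*} [Group G] (C : Set G) : Prop :=
  ∀ x : G, x ∉ C → ∃ N : Subgroup G, N.Normal ∧ N.FiniteIndex ∧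
    (x • (N : Set G)) ∩ C = ∅

namespace PTProofAux

/-! ### Residual finiteness of free groups -/

section RF

variable {α : Type*} [DecidableEq α]

/-- No adjacent cancelling pair in the word `R`. -/
def NoCan (R : List (α × Bool)) : Prop :=
  ∀ i (a : α) (b : Bool), R[i]? = some (a, b) → R[i+1]? = some (a, !b) → False

variable (R : List (α × Bool))

def pdN (a : α) (v : ℕ) : Prop :=
  R[v]? = some (a, true) ∨ (0 < v ∧ R[v-1]? = some (a, false))

def tgN (a : α) (v : ℕ) : Prop :=
  (0 < v ∧ R[v-1]? = some (a, true)) ∨ R[v]? = some (a, false)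

instance (a : α) : DecidablePred (pdN R a) := fun _ => by unfold pdN; infer_instance
instance (a : α) : DecidablePred (tgN R a) := fun _ => by unfold tgN; infer_instance

def fwdN (a : α) (v : ℕ) : ℕ := if R[v]? = some (a, true) then v + 1 else v - 1

def bwdN (a : α) (v : ℕ) : ℕ := if R[v]? = some (a, false) then v + 1 else v - 1

lemma lt_of_getElem? {v : ℕ} {c : α × Bool} (h : R[v]? = some c) : v < R.length :=
  (List.getElem?_eq_some_iff.1 h).1

variable (hR : NoCan R)
include hR

omit hR in
lemma fwd_spec1 {a : α} {v : ℕ} (h : R[v]? = some (a, true)) : fwdN R a v = v + 1 :=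
  if_pos h

lemma fwd_spec2 {a : α} {v : ℕ} (h : R[v]? = some (a, false)) :
    fwdN R a (v+1) = v := by
  have hne : ¬ R[v+1]? = some (a, true) := fun hc => hR v a false h (by simpa using hc)
  simp [fwdN, hne]

lemma bwd_spec1 {a : α} {v : ℕ} (h : R[v]? = some (a, true)) :
    bwdN R a (v+1) = v := by
  have hne : ¬ R[v+1]? = some (a, false) := fun hc => hR v a true h (by simpa using hc)
  simp [bwdN, hne]

omit hR in
lemma bwd_spec2 {a : α} {v : ℕ} (h : R[v]? = some (a, false)) : bwdN R a v = v + 1 :=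
  if_pos h

lemma fwd_le {a : α} {v : ℕ} (h : pdN R a v) : fwdN R a v ≤ R.length := by
  rcases h with h | ⟨hv, h⟩
  · rw [fwd_spec1 R h]; exact lt_of_getElem? R h
  · obtain ⟨k, rfl⟩ : ∃ k, v = k + 1 := ⟨v - 1, by omega⟩
    simp only [Nat.add_sub_cancel] at h
    rw [fwd_spec2 R hR h]
    have := lt_of_getElem? R h; omega

lemma fwd_tg {a : α} {v : ℕ} (h : pdN R a v) : tgN R a (fwdN R a v) := by
  rcases h with h | ⟨hv, h⟩
  · rw [fwd_spec1 R h]; exact Or.inl ⟨Nat.succ_pos _, by simpa using h⟩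
  · obtain ⟨k, rfl⟩ : ∃ k, v = k + 1 := ⟨v - 1, by omega⟩
    simp only [Nat.add_sub_cancel] at h
    rw [fwd_spec2 R hR h]
    exact Or.inr h

lemma bwd_le {a : α} {v : ℕ} (h : tgN R a v) : bwdN R a v ≤ R.length := by
  rcases h with ⟨hv, h⟩ | h
  · obtain ⟨k, rfl⟩ : ∃ k, v = k + 1 := ⟨v - 1, by omega⟩
    simp only [Nat.add_sub_cancel] at h
    rw [bwd_spec1 R hR h]
    have := lt_of_getElem? R h; omega
  · rw [bwd_spec2 R h]; exact lt_of_getElem? R h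

lemma bwd_pd {a : α} {v : ℕ} (h : tgN R a v) : pdN R a (bwdN R a v) := by
  rcases h with ⟨hv, h⟩ | h
  · obtain ⟨k, rfl⟩ : ∃ k, v = k + 1 := ⟨v - 1, by omega⟩
    simp only [Nat.add_sub_cancel] at h
    rw [bwd_spec1 R hR h]
    exact Or.inl h
  · rw [bwd_spec2 R h]
    exact Or.inr ⟨Nat.succ_pos _, by simpa using h⟩

lemma bwd_fwd {a : α} {v : ℕ} (h : pdN R a v) : bwdN R a (fwdN R a v) = v := by
  rcases h with h | ⟨hv, h⟩
  · rw [fwd_spec1 R h, bwd_spec1 R hR h]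
  · obtain ⟨k, rfl⟩ : ∃ k, v = k + 1 := ⟨v - 1, by omega⟩
    simp only [Nat.add_sub_cancel] at h
    rw [fwd_spec2 R hR h, bwd_spec2 R h]

lemma fwd_bwd {a : α} {v : ℕ} (h : tgN R a v) : fwdN R a (bwdN R a v) = v := by
  rcases h with ⟨hv, h⟩ | h
  · obtain ⟨k, rfl⟩ : ∃ k, v = k + 1 := ⟨v - 1, by omega⟩
    simp only [Nat.add_sub_cancel] at h
    rw [bwd_spec1 R hR h, fwd_spec1 R h]
  · rw [bwd_spec2 R h, fwd_spec2 R hR h]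

/-- The partial shift associated to a generator, as an equivalence of subtypes. -/
def eqv (a : α) :
    {v : Fin (R.length + 1) // pdN R a ↑v} ≃ {v : Fin (R.length + 1) // tgN R a ↑v} where
  toFun u := ⟨⟨fwdN R a ↑u.1, Nat.lt_succ_of_le (fwd_le R hR u.2)⟩, fwd_tg R hR u.2⟩
  invFun u := ⟨⟨bwdN R a ↑u.1, Nat.lt_succ_of_le (bwd_le R hR u.2)⟩, bwd_pd R hR u.2⟩
  left_inv u := Subtype.ext (Fin.ext (bwd_fwd R hR u.2))
  right_inv u := Subtype.ext (Fin.ext (fwd_bwd R hR u.2))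

/-- The permutation associated to a generator. -/
noncomputable def sig (a : α) : Equiv.Perm (Fin (R.length + 1)) :=
  Equiv.extendSubtype (eqv R hR a)

lemma sig_tt {a : α} {j : ℕ} (h : R[j]? = some (a, true))
    (h1 : j < R.length + 1) (h2 : j + 1 < R.length + 1) :
    sig R hR a ⟨j, h1⟩ = ⟨j+1, h2⟩ := by
  have hp : pdN R a ((⟨j, h1⟩ : Fin (R.length+1)) : ℕ) := Or.inl h
  rw [sig, Equiv.extendSubtype_apply_of_mem (eqv R hR a) ⟨j, h1⟩ hp]
  exact Fin.ext (by simp [eqv, fwdN, h])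

lemma sig_ff {a : α} {j : ℕ} (h : R[j]? = some (a, false))
    (h1 : j + 1 < R.length + 1) (h2 : j < R.length + 1) :
    sig R hR a ⟨j+1, h1⟩ = ⟨j, h2⟩ := by
  have hp : pdN R a ((⟨j+1, h1⟩ : Fin (R.length+1)) : ℕ) :=
    Or.inr ⟨Nat.succ_pos _, by simpa using h⟩
  have hne : ¬ R[j+1]? = some (a, true) := fun hc => hR j a false h (by simpa using hc)
  rw [sig, Equiv.extendSubtype_apply_of_mem (eqv R hR a) ⟨j+1, h1⟩ hp]
  exact Fin.ext (by simp [eqv, fwdN, hne])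

lemma key : ∀ j, (hj : j ≤ R.length) →
    (FreeGroup.lift (sig R hR)) (FreeGroup.mk ((R.take j).reverse)) ⟨0, Nat.succ_pos _⟩
      = ⟨j, Nat.lt_succ_of_le hj⟩ := by
  intro j
  induction j with
  | zero =>
    intro hj
    rw [List.take_zero, List.reverse_nil, ← FreeGroup.one_eq_mk, map_one]
    rfl
  | succ j ih =>
    intro hj
    have hjl : j < R.length := hj
    have hc : R[j]? = some R[j] := List.getElem?_eq_getElem hjl
    have htake : R.take (j+1) = R.take j ++ [R[j]] := by
      rw [List.take_succ, hc]; rfl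
    have hrev : (R.take (j+1)).reverse = R[j] :: (R.take j).reverse := by
      rw [htake, List.reverse_append]; rfl
    have hmul : FreeGroup.mk ((R.take (j+1)).reverse)
        = FreeGroup.mk [R[j]] * FreeGroup.mk ((R.take j).reverse) := by
      rw [FreeGroup.mul_mk, hrev]; rfl
    rw [hmul, map_mul, Equiv.Perm.mul_apply, ih (le_of_lt hjl)]
    obtain ⟨a, b, hab⟩ : ∃ a b, R[j] = (a, b) := ⟨R[j].1, R[j].2, rfl⟩
    rw [hab] at hc ⊢
    cases b
    · have hmkinv : FreeGroup.mk [(a, false)] = (FreeGroup.of a)⁻¹ := by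
        show FreeGroup.mk [(a, false)] = (FreeGroup.mk [(a, true)])⁻¹
        rw [FreeGroup.inv_mk]
        simp [FreeGroup.invRev]
      rw [hmkinv, map_inv, FreeGroup.lift_apply_of]
      have hs := sig_ff R hR hc (Nat.succ_lt_succ hjl) (Nat.lt_succ_of_lt hjl)
      rw [← hs, ← Equiv.Perm.mul_apply, inv_mul_cancel, Equiv.Perm.one_apply]
    · have hmk : FreeGroup.mk [(a, true)] = FreeGroup.of a := rfl
      rw [hmk, FreeGroup.lift_apply_of]
      exact sig_tt R hR hc _ _

end RF

section RFmain

variable {α : Type*} [DecidableEq α]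

/-- Free groups are residually finite. -/
theorem exists_normal_finiteIndex_not_mem (w : FreeGroup α) (hw : w ≠ 1) :
    ∃ N : Subgroup (FreeGroup α), N.Normal ∧ N.FiniteIndex ∧ w ∉ N := by
  classical
  set R := w.toWord.reverse with hRdef
  have hR : NoCan R := by
    intro i a b h1 h2
    have hi1 : i + 1 < R.length := lt_of_getElem? R h2
    have hd2 : R.drop (i+1) = (a, !b) :: R.drop (i+2) := by
      rw [List.drop_eq_getElem_cons hi1, (List.getElem?_eq_some_iff.1 h2).2]
    have hd1 : R.drop i = (a, b) :: R.drop (i+1) := by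
      rw [List.drop_eq_getElem_cons (by omega : i < R.length),
        (List.getElem?_eq_some_iff.1 h1).2]
    have hsplit : R = R.take i ++ (a, b) :: (a, !b) :: R.drop (i+2) := by
      conv_lhs => rw [← List.take_append_drop i R]
      rw [hd1, hd2]
    have hword : w.toWord
        = (R.drop (i+2)).reverse ++ (a, !b) :: (a, !(!b)) :: (R.take i).reverse := by
      have h0 : w.toWord = R.reverse := by rw [hRdef, List.reverse_reverse]
      rw [h0]
      conv_lhs => rw [hsplit]
      rw [Bool.not_not]
      simp
    exact FreeGroup.reduce.not (α := α) (L₁ := w.toWord) (L₂ := (R.drop (i+2)).reverse)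
      (L₃ := (R.take i).reverse) (x := a) (b := !b)
      (by rw [FreeGroup.reduce_toWord]; exact hword)
  have hlen : R.length ≠ 0 := by
    intro h0
    apply hw
    rw [← FreeGroup.toWord_eq_nil_iff]
    have : R = [] := List.length_eq_zero_iff.1 h0
    have := congrArg List.reverse this
    rwa [hRdef, List.reverse_reverse] at this
  have hmkR : FreeGroup.mk (R.reverse) = w := by
    rw [hRdef, List.reverse_reverse, FreeGroup.mk_toWord]
  have hval := key R hR R.length le_rfl
  rw [List.take_length, hmkR] at hval
  refine ⟨(FreeGroup.lift (sig R hR)).ker, MonoidHom.normal_ker _, inferInstance, ?_⟩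
  intro hk
  rw [MonoidHom.mem_ker] at hk
  rw [hk] at hval
  have : (0 : ℕ) = R.length := congrArg Fin.val hval
  omega

end RFmain

/-! ### The construction -/

section Main

variable (K L : Type) [Nonempty K] [Nonempty L] [DecidableEq K] [DecidableEq L]

noncomputable def xg : FreeGroup (K ⊕ L) := FreeGroup.of (Sum.inl (Classical.arbitrary K))

noncomputable def yg : FreeGroup (K ⊕ L) := FreeGroup.of (Sum.inr (Classical.arbitrary L))

noncomputable def sg (n : ℕ) : FreeGroup (K ⊕ L) :=
  xg K L ^ (2 ^ n) * yg K L ^ (n.factorial)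

def SS : Set (FreeGroup (K ⊕ L)) := {g | ∃ n, 1 ≤ n ∧ sg K L n = g}

/-- Homomorphism counting the total `L`-exponent. -/
noncomputable def chiL : FreeGroup (K ⊕ L) →* Multiplicative ℤ :=
  FreeGroup.lift fun c => Multiplicative.ofAdd (Sum.elim (fun _ => (0:ℤ)) (fun _ => (1:ℤ)) c)

/-- Homomorphism counting the total `K`-exponent. -/
noncomputable def chiK : FreeGroup (K ⊕ L) →* Multiplicative ℤ :=
  FreeGroup.lift fun c => Multiplicative.ofAdd (Sum.elim (fun _ => (1:ℤ)) (fun _ => (0:ℤ)) c)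

lemma chiL_sg (n : ℕ) :
    Multiplicative.toAdd (chiL K L (sg K L n)) = (n.factorial : ℤ) := by
  simp [sg, xg, yg, chiL, map_mul, map_pow, FreeGroup.lift_apply_of]

lemma chiK_sg (n : ℕ) :
    Multiplicative.toAdd (chiK K L (sg K L n)) = (2 ^ n : ℤ) := by
  simp [sg, xg, yg, chiK, map_mul, map_pow, FreeGroup.lift_apply_of]

/-- Reduction of a homomorphism to `Multiplicative ℤ` modulo `m`. -/
noncomputable def modHom (m : ℕ) (θ : FreeGroup (K ⊕ L) →* Multiplicative ℤ) :
    FreeGroup (K ⊕ L) →* Multiplicative (ZMod m) :=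
  (AddMonoidHom.toMultiplicative (Int.castAddHom (ZMod m))).comp θ

lemma mem_modHom_ker (m : ℕ) (θ : FreeGroup (K ⊕ L) →* Multiplicative ℤ)
    (u : FreeGroup (K ⊕ L)) :
    u ∈ (modHom K L m θ).ker ↔ ((Multiplicative.toAdd (θ u) : ℤ) : ZMod m) = 0 := by
  rw [MonoidHom.mem_ker]
  constructor
  · intro h
    have := congrArg Multiplicative.toAdd h
    simpa [modHom] using this
  · intro h
    have : Multiplicative.toAdd ((modHom K L m θ) u) = 0 := by simpa [modHom] using h
    simpa using congrArg Multiplicative.ofAdd this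

/-- The core separation lemma. -/
lemma core (g : FreeGroup (K ⊕ L)) (θ : FreeGroup (K ⊕ L) →* Multiplicative ℤ)
    (m M : ℕ) (hm : m ≠ 0)
    (hM : ∀ n, 1 ≤ n →
      ((Multiplicative.toAdd (θ (sg K L n)) - Multiplicative.toAdd (θ g) : ℤ) : ZMod m) = 0 →
      n < M) :
    ∃ N : Subgroup (FreeGroup (K ⊕ L)), N.Normal ∧ N.FiniteIndex ∧
      ∀ k, 1 ≤ k → sg K L k ∈ g • (N : Set (FreeGroup (K ⊕ L))) → g = sg K L k := by
  classical
  haveI : NeZero m := ⟨hm⟩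
  have hsep : ∀ k : ℕ, ∃ P : Subgroup (FreeGroup (K ⊕ L)),
      P.Normal ∧ P.FiniteIndex ∧ (g ≠ sg K L k → g⁻¹ * sg K L k ∉ P) := by
    intro k
    by_cases h : g = sg K L k
    · exact ⟨⊤, inferInstance, inferInstance, fun hc => absurd h hc⟩
    · obtain ⟨P, h1, h2, h3⟩ := exists_normal_finiteIndex_not_mem (g⁻¹ * sg K L k)
        (fun he => h (by rwa [inv_mul_eq_one] at he))
      exact ⟨P, h1, h2, fun _ => h3⟩
  choose P hPn hPf hPs using hsep
  set N : Subgroup (FreeGroup (K ⊕ L)) :=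
    (modHom K L m θ).ker ⊓ ⨅ k : Finset.range M, P ↑k with hN
  haveI hker_fi : (modHom K L m θ).ker.FiniteIndex := Subgroup.finiteIndex_ker _
  haveI hinf_fi : (⨅ k : Finset.range M, P ↑k).FiniteIndex :=
    Subgroup.finiteIndex_iInf fun i => hPf ↑i
  haveI hinf_norm : (⨅ k : Finset.range M, P ↑k).Normal := by
    constructor
    intro x hx c
    rw [Subgroup.mem_iInf] at hx ⊢
    exact fun i => (hPn ↑i).conj_mem x (hx i) c
  refine ⟨N, inferInstance, inferInstance, ?_⟩
  intro k hk hmem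
  rw [mem_leftCoset_iff, SetLike.mem_coe, hN, Subgroup.mem_inf, Subgroup.mem_iInf] at hmem
  obtain ⟨hmem1, hmem2⟩ := hmem
  have hkM : k < M := by
    apply hM k hk
    rw [mem_modHom_ker] at hmem1
    have heq : Multiplicative.toAdd (θ (g⁻¹ * sg K L k))
        = Multiplicative.toAdd (θ (sg K L k)) - Multiplicative.toAdd (θ g) := by
      rw [map_mul, map_inv, toAdd_mul, toAdd_inv]; ring
    rwa [heq] at hmem1
  by_contra hne
  exact hPs k hne (hmem2 ⟨k, Finset.mem_range.2 hkM⟩)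

lemma sep_from_SS (g : FreeGroup (K ⊕ L)) (hg : g ∉ SS K L) :
    ∃ N : Subgroup (FreeGroup (K ⊕ L)), N.Normal ∧ N.FiniteIndex ∧
      (g • (N : Set (FreeGroup (K ⊕ L)))) ∩ SS K L = ∅ := by
  have hdata : ∃ (θ : FreeGroup (K ⊕ L) →* Multiplicative ℤ) (m M : ℕ), m ≠ 0 ∧
      ∀ n, 1 ≤ n →
        ((Multiplicative.toAdd (θ (sg K L n)) - Multiplicative.toAdd (θ g) : ℤ) : ZMod m) = 0 →
        n < M := by
    by_cases hb : Multiplicative.toAdd (chiL K L g) = 0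
    · by_cases ha : Multiplicative.toAdd (chiK K L g) = 0
      · -- use chiK mod 3; no n works at all
        refine ⟨chiK K L, 3, 0, by norm_num, ?_⟩
        intro n hn hcast
        exfalso
        rw [chiK_sg, ha, sub_zero] at hcast
        have h3 : ((3:ℕ) : ℤ) ∣ ((2 ^ n : ℕ) : ℤ) := by
          rw [← ZMod.intCast_zmod_eq_zero_iff_dvd] at *
          · push_cast at hcast ⊢; exact hcast
        rw [Int.natCast_dvd_natCast] at h3
        have := Nat.Prime.dvd_of_dvd_pow (p := 3) (by norm_num) h3
        norm_num at this
      · -- use chiK mod 2 ^ natAbs a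
        set a := Multiplicative.toAdd (chiK K L g) with hadef
        refine ⟨chiK K L, 2 ^ a.natAbs, a.natAbs, pow_ne_zero _ two_ne_zero, ?_⟩
        intro n hn hcast
        by_contra hlt
        push_neg at hlt
        rw [chiK_sg] at hcast
        have hdvd : ((2 ^ a.natAbs : ℕ) : ℤ) ∣ (2:ℤ) ^ n := by
          push_cast
          exact pow_dvd_pow 2 hlt
        have hz : (((2:ℤ) ^ n : ℤ) : ZMod (2 ^ a.natAbs)) = 0 := by
          rw [ZMod.intCast_zmod_eq_zero_iff_dvd]; exact hdvd
        rw [Int.cast_sub, hz, zero_sub, neg_eq_zero, ZMod.intCast_zmod_eq_zero_iff_dvd] at hcast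
        have hdvd2 : 2 ^ a.natAbs ∣ a.natAbs := by
          have h' := Int.natAbs_dvd_natAbs.2 hcast
          rwa [Int.natAbs_natCast] at h'
        have h1 := Nat.le_of_dvd (Int.natAbs_pos.2 ha) hdvd2
        have h2 := Nat.lt_two_pow_self (n := a.natAbs)
        omega
    · -- use chiL mod (natAbs b + 1)
      set b := Multiplicative.toAdd (chiL K L g) with hbdef
      refine ⟨chiL K L, b.natAbs + 1, b.natAbs + 1, Nat.succ_ne_zero _, ?_⟩
      intro n hn hcast
      by_contra hlt
      push_neg at hlt
      rw [chiL_sg] at hcast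
      have hdvd : ((b.natAbs + 1 : ℕ) : ℤ) ∣ (n.factorial : ℤ) := by
        exact_mod_cast Int.natCast_dvd_natCast.2 (Nat.dvd_factorial (Nat.succ_pos _) hlt)
      have hz : ((n.factorial : ℤ) : ZMod (b.natAbs + 1)) = 0 := by
        rw [ZMod.intCast_zmod_eq_zero_iff_dvd]; exact_mod_cast hdvd
      rw [Int.cast_sub, hz, zero_sub, neg_eq_zero, ZMod.intCast_zmod_eq_zero_iff_dvd] at hcast
      have hdvd2 : b.natAbs + 1 ∣ b.natAbs := by
        have h' := Int.natAbs_dvd_natAbs.2 hcast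
        rwa [Int.natAbs_natCast] at h'
      have := Nat.le_of_dvd (Int.natAbs_pos.2 hb) hdvd2
      omega
  obtain ⟨θ, m, M, hm, hM⟩ := hdata
  obtain ⟨N, h1, h2, h3⟩ := core K L g θ m M hm hM
  refine ⟨N, h1, h2, ?_⟩
  rw [Set.eq_empty_iff_forall_notMem]
  rintro z ⟨hzc, n, hn, rfl⟩
  exact hg ⟨n, hn, (h3 n hn hzc).symm⟩

end Main

end PTProofAux

/-- Let `F` be the free group on `K ⊕ L` (`K`, `L` finite nonempty) and `⟨K⟩`
the subgroup generated by the `K`-generators.  There is a subset `S ⊆ F` that is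
closed and discrete in the profinite topology of `F`, whose every element has a
reduced word ending in a letter from `L` (or an inverse of one), and such that
the product set `S⟨K⟩` is not closed in the profinite topology of `F`. -/
theorem exists_closed_discrete_set_with_L_tails_and_product_not_closed
    (K L : Type) [Fintype K] [Fintype L] [Nonempty K] [Nonempty L]
    [DecidableEq K] [DecidableEq L] :
    ∃ S : Set (FreeGroup (K ⊕ L)),
      IsPTClosed S ∧
      (∀ s ∈ S, ∃ N : Subgroup (FreeGroup (K ⊕ L)), N.Normal ∧ N.FiniteIndex ∧
        (s • (N : Set (FreeGroup (K ⊕ L)))) ∩ S = {s}) ∧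
      (∀ s ∈ S, ∃ (l : L) (b : Bool),
        (FreeGroup.toWord s).getLast? = some (Sum.inr l, b)) ∧
      ¬ IsPTClosed (S *
        (Subgroup.closure (Set.range fun k : K => FreeGroup.of (Sum.inl k : K ⊕ L)) :
          Set (FreeGroup (K ⊕ L)))) := by
  classical
  open PTProofAux in
  refine ⟨SS K L, ?_, ?_, ?_, ?_⟩
  · -- closed
    intro g hg
    exact sep_from_SS K L g hg
  · -- discrete
    rintro s ⟨n, hn, rfl⟩
    have hM : ∀ k, 1 ≤ k →
        ((Multiplicative.toAdd (chiL K L (sg K L k))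
          - Multiplicative.toAdd (chiL K L (sg K L n)) : ℤ) : ZMod (n.factorial + 1)) = 0 →
        k < n.factorial + 1 := by
      intro k hk hcast
      by_contra hlt
      push_neg at hlt
      rw [chiL_sg, chiL_sg] at hcast
      have hdvd : ((n.factorial + 1 : ℕ) : ℤ) ∣ (k.factorial : ℤ) := by
        exact_mod_cast Int.natCast_dvd_natCast.2 (Nat.dvd_factorial (Nat.succ_pos _) hlt)
      have hz : ((k.factorial : ℤ) : ZMod (n.factorial + 1)) = 0 := by
        rw [ZMod.intCast_zmod_eq_zero_iff_dvd]; exact_mod_cast hdvd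
      rw [Int.cast_sub, hz, zero_sub, neg_eq_zero, ZMod.intCast_zmod_eq_zero_iff_dvd] at hcast
      have hdvd2 : n.factorial + 1 ∣ n.factorial := by
        have h' := Int.natAbs_dvd_natAbs.2 hcast
        rwa [Int.natAbs_natCast] at h'
      have := Nat.le_of_dvd n.factorial_pos hdvd2
      omega
    obtain ⟨N, h1, h2, h3⟩ := core K L (sg K L n) (chiL K L)
      (n.factorial + 1) (n.factorial + 1) (Nat.succ_ne_zero _) hM
    refine ⟨N, h1, h2, ?_⟩
    rw [Set.eq_singleton_iff_unique_mem]
    constructor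
    · exact ⟨by rw [mem_leftCoset_iff, inv_mul_cancel]; exact N.one_mem, n, hn, rfl⟩
    · rintro z ⟨hzc, k, hk, rfl⟩
      exact (h3 k hk hzc).symm
  · -- reduced word ends with an L-letter
    rintro s ⟨n, hn, rfl⟩
    refine ⟨Classical.arbitrary L, true, ?_⟩
    have hpow : ∀ (a : K ⊕ L) (p : ℕ),
        FreeGroup.of a ^ p = FreeGroup.mk (List.replicate p (a, true)) := by
      intro a p
      induction p with
      | zero => rw [pow_zero, List.replicate_zero, FreeGroup.one_eq_mk]
      | succ p ih =>
        rw [pow_succ, ih, List.replicate_succ']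
        show _ = FreeGroup.mk (List.replicate p (a, true) ++ [(a, true)])
        rw [← FreeGroup.mul_mk]
        rfl
    have halltrue : ∀ (Lst : List ((K ⊕ L) × Bool)), (∀ c ∈ Lst, c.2 = true) →
        FreeGroup.reduce Lst = Lst := by
      intro Lst h
      induction Lst with
      | nil => rfl
      | cons c t ih =>
        rw [FreeGroup.reduce.cons, ih (fun d hd => h d (List.mem_cons_of_mem _ hd))]
        cases t with
        | nil => rfl
        | cons d t' =>
          have hc := h c List.mem_cons_self
          have hd := h d (List.mem_cons_of_mem _ List.mem_cons_self)
          show (if c.1 = d.1 ∧ c.2 = !d.2 then t' else c :: d :: t') = c :: d :: t'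
          rw [if_neg]
          rintro ⟨-, h2⟩
          rw [hc, hd] at h2
          simp at h2
    have hword : (sg K L n).toWord
        = List.replicate (2 ^ n) ((Sum.inl (Classical.arbitrary K) : K ⊕ L), true)
          ++ List.replicate n.factorial ((Sum.inr (Classical.arbitrary L) : K ⊕ L), true) := by
      rw [sg, xg, yg, hpow, hpow, FreeGroup.mul_mk, FreeGroup.toWord_mk]
      apply halltrue
      intro c hc
      rw [List.mem_append] at hc
      rcases hc with hc | hc <;> exact (List.eq_of_mem_replicate hc) ▸ rfl
    rw [hword]
    have hfac : n.factorial = (n.factorial - 1) + 1 :=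
      (Nat.succ_pred_eq_of_pos n.factorial_pos).symm
    rw [hfac, List.replicate_succ', ← List.append_assoc, List.getLast?_concat]
  · -- the product set is not closed
    intro hcl
    have h1 : (1 : FreeGroup (K ⊕ L)) ∉ SS K L *
        (Subgroup.closure (Set.range fun k : K => FreeGroup.of (Sum.inl k : K ⊕ L)) :
          Set (FreeGroup (K ⊕ L))) := by
      intro hmem
      rw [Set.mem_mul] at hmem
      obtain ⟨u, hu, v, hv, huv⟩ := hmem
      obtain ⟨n, hn, rfl⟩ := hu
      have hle : Subgroup.closure (Set.range fun k : K => FreeGroup.of (Sum.inl k : K ⊕ L))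
          ≤ (chiL K L).ker := by
        rw [Subgroup.closure_le]
        rintro _ ⟨k, rfl⟩
        simp [chiL, FreeGroup.lift_apply_of, MonoidHom.mem_ker]
      have hv1 : chiL K L v = 1 := hle hv
      have : chiL K L (sg K L n * v) = 1 := by rw [huv, map_one]
      rw [map_mul, hv1, mul_one] at this
      have h0 := congrArg Multiplicative.toAdd this
      rw [chiL_sg] at h0
      have : (n.factorial : ℤ) = 0 := h0
      have := n.factorial_pos
      omega
    obtain ⟨N, hNn, hNf, hNe⟩ := hcl 1 h1
    haveI := hNn
    haveI := hNf
    set n := N.index with hndef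
    have hn0 : n ≠ 0 := hNf.index_ne_zero
    have hyN : yg K L ^ n.factorial ∈ N := by
      have hmem : (yg K L ^ n) ^ (n.factorial / n) ∈ N :=
        N.pow_mem (Subgroup.pow_index_mem N (yg K L)) _
      rwa [← pow_mul, Nat.mul_div_cancel'
        (Nat.dvd_factorial (Nat.pos_of_ne_zero hn0) le_rfl)] at hmem
    set z : FreeGroup (K ⊕ L) := sg K L n * (xg K L ^ (2 ^ n))⁻¹ with hzdef
    have hzN : z ∈ N := by
      have := hNn.conj_mem _ hyN (xg K L ^ (2 ^ n))
      rwa [hzdef, sg]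
    have hzP : z ∈ SS K L *
        (Subgroup.closure (Set.range fun k : K => FreeGroup.of (Sum.inl k : K ⊕ L)) :
          Set (FreeGroup (K ⊕ L))) := by
      apply Set.mul_mem_mul
      · exact ⟨n, Nat.pos_of_ne_zero hn0, rfl⟩
      · have hx : xg K L ∈ Subgroup.closure
            (Set.range fun k : K => FreeGroup.of (Sum.inl k : K ⊕ L)) :=
          Subgroup.subset_closure ⟨Classical.arbitrary K, rfl⟩
        exact Subgroup.inv_mem _ (Subgroup.pow_mem _ hx _)
    rw [Set.eq_empty_iff_forall_notMem] at hNe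
    exact hNe z ⟨by rw [one_smul]; exact hzN, hzP⟩
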